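/- If σ is an acyclic circuit signature of a directed graph D and e is a non-loop edge of D, then the contracted signature σ/e is an acyclic circuit signature of D/e. -/

import Mathlib

open Finset Pointwise

noncomputable section

variable {V E ι : Type*}

/-- The vector `x_f ∈ ℝ^V` of an edge `f` with tail `t f` and head `h f`:
`+1` at the head, `-1` at the tail, `0` elsewhere (so `0` for a loop). -/
def xvec [DecidableEq V] (t h : E → V) (f : E) : V → ℝ :=
  fun v => (if v = h f then 1 else 0) - (if v = t f then 1 else 0)

/-- The extended root polytope of the subgraph with edge set `S`:
`conv({0} ∪ {x_f : f ∈ S})`. -/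
def rootPolyOn [DecidableEq V] (t h : E → V) (S : Set E) : Set (V → ℝ) :=
  convexHull ℝ ({0} ∪ (xvec t h '' S))

/-- The underlying (simple) undirected graph of the edges in `S`. -/
def underlyingOn (t h : E → V) (S : Set E) : SimpleGraph V :=
  SimpleGraph.fromRel (fun u v => ∃ f ∈ S, t f = u ∧ h f = v)

/-- A spanning tree: a set of edges whose underlying graph is connected and which
has `|V| - 1` edges. -/
def IsSpanningTree [Fintype V] (t h : E → V) (T : Finset E) : Prop :=
  (underlyingOn t h ↑T).Connected ∧ T.card + 1 = Fintype.card V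

/-- The number of lattice points of the `k`-th dilate of `Q`. -/
def latCount [Fintype ι] (Q : Set (ι → ℝ)) (k : ℕ) : ℕ :=
  Nat.card {p : ι → ℤ // (fun i => (p i : ℝ)) ∈ (k : ℝ) • Q}

/-- The Ehrhart series of `Q` as a formal power series. -/
def ehrSeries [Fintype ι] (Q : Set (ι → ℝ)) : PowerSeries ℤ :=
  PowerSeries.mk fun k => (latCount Q k : ℤ)

/-- The dimension of a polytope: the rank of its vector span. -/
def pdim (Q : Set (ι → ℝ)) : ℕ := Module.finrank ℝ ↥(vectorSpan ℝ Q)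

/-- `p` is the `h^*`-polynomial of `Q`: `(1-t)^{dim Q + 1} · Ehr_Q(t) = p(t)`. -/
def IsHStar [Fintype ι] (Q : Set (ι → ℝ)) (p : Polynomial ℤ) : Prop :=
  (1 - PowerSeries.X) ^ (pdim Q + 1) * ehrSeries Q = PowerSeries.mk fun i => p.coeff i

/-- The `±1` vector of a signed cycle with positive arc `Cp` and negative arc `Cm`. -/
def chiVec [DecidableEq E] (Cp Cm : Finset E) : E → ℝ :=
  fun f => (if f ∈ Cp then 1 else 0) - (if f ∈ Cm then 1 else 0)

/-- A circulation: an assignment of reals to edges with zero net flow at each vertex. -/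
def IsCirculation [Fintype E] [DecidableEq V] (t h : E → V) (φ : E → ℝ) : Prop :=
  ∑ f, φ f • xvec t h f = 0

/-- `(Cp, Cm)` is a signed cycle: the arcs are disjoint, the union is nonempty, the
`±1` vector is a circulation, and the support `Cp ∪ Cm` is minimal among supports of
nonzero circulations (i.e. it is a circuit of the graphic oriented matroid). -/
def IsSignedCycle [Fintype E] [DecidableEq E] [DecidableEq V] (t h : E → V)
    (Cp Cm : Finset E) : Prop :=
  Disjoint Cp Cm ∧ (Cp ∪ Cm).Nonempty ∧ IsCirculation t h (chiVec Cp Cm) ∧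
    ∀ φ : E → ℝ, IsCirculation t h φ → φ ≠ 0 →
      (∀ f, φ f ≠ 0 → f ∈ Cp ∪ Cm) → ∀ f ∈ Cp ∪ Cm, φ f ≠ 0

/-- A circuit signature: a choice, for each cycle, of exactly one of its two
orientations. -/
def IsCircuitSignature [Fintype E] [DecidableEq E] [DecidableEq V] (t h : E → V)
    (σ : Set (Finset E × Finset E)) : Prop :=
  (∀ q ∈ σ, IsSignedCycle t h q.1 q.2) ∧
    ∀ Cp Cm : Finset E, IsSignedCycle t h Cp Cm → ((Cp, Cm) ∈ σ ↔ (Cm, Cp) ∉ σ)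

/-- Acyclicity of a circuit signature: no nontrivial nonnegative combination of the
vectors of the chosen signed cycles vanishes. -/
def IsAcyclicSig [DecidableEq E] (σ : Set (Finset E × Finset E)) : Prop :=
  ∀ (s : Finset (Finset E × Finset E)) (a : Finset E × Finset E → ℝ),
    ↑s ⊆ σ → (∀ q, 0 ≤ a q) → (∃ q ∈ s, a q ≠ 0) →
      ∑ q ∈ s, a q • chiVec q.1 q.2 ≠ 0

/-- A weight function is generic if the two arcs of every cycle have different
total weights. -/
def GenericWeight [Fintype E] [DecidableEq E] [DecidableEq V] (t h : E → V)
    (w : E → ℝ) : Prop :=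
  ∀ Cp Cm : Finset E, IsSignedCycle t h Cp Cm → ∑ f ∈ Cp, w f ≠ ∑ f ∈ Cm, w f

/-- The circuit signature `cir^w`: orient each cycle so that the positive arc has
the larger total `w`-weight. -/
def cirw [Fintype E] [DecidableEq E] [DecidableEq V] (t h : E → V) (w : E → ℝ) :
    Set (Finset E × Finset E) :=
  {q | IsSignedCycle t h q.1 q.2 ∧ ∑ f ∈ q.2, w f < ∑ f ∈ q.1, w f}

/-- `tree(D,σ)`: spanning trees `T` such that every non-tree edge `f` lies in the
positive arc of the (σ-oriented) fundamental cycle of `f`, i.e. of the unique cycle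
contained in `T ∪ {f}`. -/
def treeSet [Fintype V] [Fintype E] [DecidableEq V] [DecidableEq E] (t h : E → V)
    (σ : Set (Finset E × Finset E)) : Set (Finset E) :=
  {T | IsSpanningTree t h T ∧
    ∀ f ∉ T, ∀ Cp Cm : Finset E, (Cp, Cm) ∈ σ → Cp ∪ Cm ⊆ insert f T → f ∈ Cp}

/-- `F` is a face of `Q`: the locus where some linear functional bounded above on `Q`
attains its maximum. -/
def IsFaceOf (Q F : Set (ι → ℝ)) : Prop :=
  ∃ (l : (ι → ℝ) →ₗ[ℝ] ℝ) (c : ℝ), (∀ y ∈ Q, l y ≤ c) ∧ F = {y ∈ Q | l y = c}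

/-- `F` is a facet of `Q`: a face of codimension one. -/
def IsFacetOf (Q F : Set (ι → ℝ)) : Prop :=
  IsFaceOf Q F ∧ pdim F + 1 = pdim Q

end

section Contraction

variable {V E : Type*} [Fintype V] [Fintype E] [DecidableEq V] [DecidableEq E]

/-- The vertex identification map of the contraction `D/e` (for a non-loop `e`):
the head of `e` is merged into the tail of `e`. -/
def cmap (t h : E → V) (e : E) : V → V := fun v => if v = h e then t e else v

/-- Tail map of the contracted digraph `D/e` (edge set `E - e`). -/
def contractTail (t h : E → V) (e : E) : {f : E // f ≠ e} → V :=
  fun f => cmap t h e (t f.1)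

/-- Head map of the contracted digraph `D/e` (edge set `E - e`). -/
def contractHead (t h : E → V) (e : E) : {f : E // f ≠ e} → V :=
  fun f => cmap t h e (h f.1)

/-- The contracted signature `σ/e`: a signed cycle of `D/e` belongs to `σ/e` iff it
is the restriction to `E - e` of a signed cycle in `σ`. -/
def contractSig (t h : E → V) (σ : Set (Finset E × Finset E)) (e : E) :
    Set (Finset {f : E // f ≠ e} × Finset {f : E // f ≠ e}) :=
  {q | IsSignedCycle (contractTail t h e) (contractHead t h e) q.1 q.2 ∧
    ∃ c ∈ σ, q.1 = c.1.subtype (· ≠ e) ∧ q.2 = c.2.subtype (· ≠ e)}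

set_option linter.unusedSectionVars false
set_option linter.unnecessarySeqFocus false
set_option maxHeartbeats 1000000

lemma xvec_ne_zero (t h : E → V) {g : E} (hg : t g ≠ h g) : xvec t h g ≠ 0 := by
  intro hx
  have h1 := congrFun hx (h g)
  simp [xvec, Ne.symm hg] at h1

lemma circ_sub {t h : E → V} {φ ψ : E → ℝ} (h1 : IsCirculation t h φ)
    (h2 : IsCirculation t h ψ) : IsCirculation t h (φ - ψ) := by
  unfold IsCirculation at *
  simp only [Pi.sub_apply, sub_smul, Finset.sum_sub_distrib, h1, h2, sub_zero]

lemma circ_neg {t h : E → V} {φ : E → ℝ} (h1 : IsCirculation t h φ) :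
    IsCirculation t h (-φ) := by
  unfold IsCirculation at *
  simp only [Pi.neg_apply, neg_smul, Finset.sum_neg_distrib, h1, neg_zero]

lemma circ_combo {t h : E → V} {φ ψ : E → ℝ} (c : ℝ) (h1 : IsCirculation t h φ)
    (h2 : IsCirculation t h ψ) : IsCirculation t h (fun f => φ f - c * ψ f) := by
  unfold IsCirculation at *
  simp only [sub_smul, mul_smul, Finset.sum_sub_distrib, h1, ← Finset.smul_sum, h2,
    smul_zero, sub_zero]

lemma chiVec_swap (Cp Cm : Finset E) : chiVec Cm Cp = -chiVec Cp Cm := by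
  funext f; simp only [chiVec, Pi.neg_apply]; ring

lemma mem_iff_chi_one {Cp Cm : Finset E} (hd : Disjoint Cp Cm) (f : E) :
    f ∈ Cp ↔ chiVec Cp Cm f = 1 := by
  by_cases h1 : f ∈ Cp <;> by_cases h2 : f ∈ Cm <;>
    simp_all [chiVec, Finset.disjoint_left] <;> norm_num

lemma mem_iff_chi_negone {Cp Cm : Finset E} (hd : Disjoint Cp Cm) (f : E) :
    f ∈ Cm ↔ chiVec Cp Cm f = -1 := by
  by_cases h1 : f ∈ Cp <;> by_cases h2 : f ∈ Cm <;>
    simp_all [chiVec, Finset.disjoint_left] <;> norm_num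

/-- The contraction projection on vertex space. -/
noncomputable def Pl (t h : E → V) (g : E) : (V → ℝ) →ₗ[ℝ] (V → ℝ) where
  toFun x := fun v => if v = t g then x (t g) + x (h g) else if v = h g then 0 else x v
  map_add' x y := by
    funext v; simp only [Pi.add_apply]; split_ifs <;> ring
  map_smul' c x := by
    funext v; simp only [Pi.smul_apply, smul_eq_mul, RingHom.id_apply]
    split_ifs <;> ring

lemma sum_split (g : E) (F : E → (V → ℝ)) :
    ∑ f, F f = F g + ∑ f : {f : E // f ≠ g}, F f.1 := by
  rw [← Finset.sum_subtype (univ.erase g) (p := fun f => f ≠ g) (by simp) F]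
  rw [← Finset.add_sum_erase _ F (mem_univ g)]

lemma Pl_xvec (t h : E → V) {g : E} (hg : t g ≠ h g) {f : E} (hf : f ≠ g) :
    Pl t h g (xvec t h f) =
      xvec (contractTail t h g) (contractHead t h g) ⟨f, hf⟩ := by
  funext v
  simp only [Pl, LinearMap.coe_mk, AddHom.coe_mk, xvec, contractTail, contractHead, cmap]
  by_cases h1 : v = t g <;> by_cases h2 : v = h g <;>
    by_cases h3 : h f = h g <;> by_cases h4 : t f = h g <;>
      simp_all [Ne.symm hg] <;> simp_all [eq_comm] <;> ring

lemma Pl_xvec_self (t h : E → V) {g : E} (hg : t g ≠ h g) :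
    Pl t h g (xvec t h g) = 0 := by
  funext v
  simp only [Pl, LinearMap.coe_mk, AddHom.coe_mk, xvec, Pi.zero_apply]
  by_cases h1 : v = t g <;> by_cases h2 : v = h g <;> simp_all [Ne.symm hg]

lemma restrict_circ {t h : E → V} {g : E} (hg : t g ≠ h g) {φ : E → ℝ}
    (hφ : IsCirculation t h φ) :
    IsCirculation (contractTail t h g) (contractHead t h g) (fun f => φ f.1) := by
  unfold IsCirculation at *
  have h0 := congrArg (Pl t h g) hφ
  rw [map_sum, map_zero] at h0
  simp only [map_smul] at h0
  rw [sum_split g, Pl_xvec_self t h hg, smul_zero, zero_add] at h0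
  rw [← h0]
  apply Finset.sum_congr rfl
  intro f _
  rw [Pl_xvec t h hg f.2]

/-- extension of a circulation of `D/g` to `D`. -/
noncomputable def extendC (t h : E → V) (g : E) (φ' : {f : E // f ≠ g} → ℝ) : E → ℝ :=
  fun f => if hf : f = g then -((∑ f' : {f : E // f ≠ g}, φ' f' • xvec t h f'.1) (h g))
    else φ' ⟨f, hf⟩

lemma extendC_apply (t h : E → V) (g : E) (φ' : {f : E // f ≠ g} → ℝ) (f : {f : E // f ≠ g}) :
    extendC t h g φ' f.1 = φ' f := by
  simp [extendC, f.2]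

lemma extendC_circ {t h : E → V} {g : E} (hg : t g ≠ h g) {φ' : {f : E // f ≠ g} → ℝ}
    (hφ' : IsCirculation (contractTail t h g) (contractHead t h g) φ') :
    IsCirculation t h (extendC t h g φ') := by
  unfold IsCirculation at *
  set y : V → ℝ := ∑ f' : {f : E // f ≠ g}, φ' f' • xvec t h f'.1 with hy
  have hPy : Pl t h g y = 0 := by
    rw [hy, map_sum]
    simp only [map_smul]
    rw [← hφ']
    apply Finset.sum_congr rfl
    intro f _
    rw [Pl_xvec t h hg f.2]
  have hyx : y = y (h g) • xvec t h g := by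
    funext v
    have hv := congrFun hPy v
    simp only [Pl, LinearMap.coe_mk, AddHom.coe_mk, Pi.zero_apply] at hv
    by_cases h1 : v = t g
    · subst h1
      rw [if_pos rfl] at hv
      simp [xvec, Ne.symm hg, hg]
      linarith
    · by_cases h2 : v = h g
      · subst h2
        simp [xvec, Ne.symm hg]
      · rw [if_neg h1, if_neg h2] at hv
        simp [xvec, h1, h2, hv]
  rw [sum_split g]
  have h1 : extendC t h g φ' g = -(y (h g)) := by simp [extendC, hy]
  have h2 : (∑ f : {f : E // f ≠ g}, extendC t h g φ' f.1 • xvec t h f.1) = y := by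
    rw [hy]
    apply Finset.sum_congr rfl
    intro f _
    rw [extendC_apply]
  have h3 : xvec t h g (h g) = 1 := by simp [xvec, Ne.symm hg]
  rw [h1, h2, hyx]
  simp [Pi.smul_apply, h3]

lemma circ_supported_eq_zero {t h : E → V} {g : E} (hg : t g ≠ h g) {φ : E → ℝ}
    (hφ : IsCirculation t h φ) (hs : ∀ f, f ≠ g → φ f = 0) : φ = 0 := by
  unfold IsCirculation at hφ
  rw [sum_split g] at hφ
  have h2 : (∑ f : {f : E // f ≠ g}, φ f.1 • xvec t h f.1) = 0 := by
    apply Finset.sum_eq_zero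
    intro f _
    rw [hs f.1 f.2, zero_smul]
  rw [h2, add_zero] at hφ
  have hφg : φ g = 0 := by
    by_contra hne
    exact xvec_ne_zero t h hg (by simpa [hne] using (smul_eq_zero.mp hφ).resolve_left hne)
  funext f
  by_cases hf : f = g
  · subst hf; exact hφg
  · exact hs f hf


lemma sum_delta {V E : Type*} [Fintype V] [Fintype E] [DecidableEq V] [DecidableEq E]
    (c : E) (a : ℝ) (F : E → V → ℝ) :
    ∑ f, (if f = c then a else 0) • F f = a • F c := by
  rw [Finset.sum_eq_single c] <;> simp +contextual

lemma circ_pair {V E : Type*} [Fintype V] [Fintype E] [DecidableEq V] [DecidableEq E]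
    {t h : E → V} {e g : E} (hne : e ≠ g) (ε : ℝ)
    (hx : xvec t h e + ε • xvec t h g = 0) :
    IsCirculation t h (fun f => (if f = e then (1 : ℝ) else 0) + (if f = g then ε else 0)) := by
  unfold IsCirculation
  simp only [add_smul]
  rw [Finset.sum_add_distrib, sum_delta, sum_delta, one_smul]
  exact hx

lemma loop_in_contract {V E : Type*} [Fintype V] [Fintype E] [DecidableEq V] [DecidableEq E]
    {t h : E → V} {g e : E} (he : t e ≠ h e)
    (hc : cmap t h g (t e) = cmap t h g (h e)) :
    (t e = t g ∧ h e = h g) ∨ (t e = h g ∧ h e = t g) := by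
  unfold cmap at hc
  by_cases h1 : t e = h g
  · by_cases h2 : h e = h g
    · exact absurd (h1.trans h2.symm) he
    · right
      rw [if_pos h1, if_neg h2] at hc
      exact ⟨h1, hc.symm⟩
  · by_cases h2 : h e = h g
    · left
      rw [if_neg h1, if_pos h2] at hc
      exact ⟨hc, h2⟩
    · rw [if_neg h1, if_neg h2] at hc
      exact absurd hc he

lemma REG : ∀ (n : ℕ) {V E : Type*} [Fintype V] [Fintype E] [DecidableEq V] [DecidableEq E]
    (t h : E → V) (C : Finset E) (ψ : E → ℝ) (e : E),
    C.card ≤ n → e ∈ C → t e ≠ h e →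
    IsCirculation t h ψ →
    (∀ f, ψ f ≠ 0 → f ∈ C) →
    (∀ φ : E → ℝ, IsCirculation t h φ → φ ≠ 0 → (∀ f, φ f ≠ 0 → f ∈ C) →
      ∀ f ∈ C, φ f ≠ 0) →
    (∀ f ∈ C, f ≠ e → ψ f = 1 ∨ ψ f = -1) →
    ψ e ≠ 0 → (ψ e = 1 ∨ ψ e = -1) := by
  intro n
  induction n with
  | zero =>
    intro V E _ _ _ _ t h C ψ e hcard heC
    rw [Nat.le_zero, Finset.card_eq_zero] at hcard
    subst hcard
    exact absurd heC (Finset.notMem_empty e)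
  | succ n ih =>
    intro V E _ _ _ _ t h C ψ e hcard heC he hcirc hsupp hmin hpm hψe
    -- no loops in C
    have hnoloop : ∀ g ∈ C, t g ≠ h g := by
      intro g hgC hloop
      set θ : E → ℝ := fun f => if f = g then 1 else 0 with hθ
      have hθc : IsCirculation t h θ := by
        unfold IsCirculation
        rw [hθ, sum_delta, one_smul]
        funext v
        simp [xvec, hloop]
      have hθne : θ ≠ 0 := by
        intro h0
        have := congrFun h0 g
        simp [hθ] at this
      have hθsupp : ∀ f, θ f ≠ 0 → f ∈ C := by
        intro f hf
        rw [hθ] at hf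
        by_cases hfg : f = g
        · subst hfg; exact hgC
        · simp [hfg] at hf
      have := hmin θ hθc hθne hθsupp e heC
      have heg : e ≠ g := by
        intro hh; subst hh; exact he hloop
      simp [hθ, heg] at this
    -- exchange helper
    have exch : ∀ g ∈ C, g ≠ e → ∀ ε : ℝ, (ε = 1 ∨ ε = -1) →
        xvec t h e + ε • xvec t h g = 0 → ψ e = 1 ∨ ψ e = -1 := by
      intro g hgC hge ε hε hx
      have hne : e ≠ g := Ne.symm hge
      have hε0 : ε ≠ 0 := by rcases hε with hε | hε <;> rw [hε] <;> norm_num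
      set θ : E → ℝ := fun f => (if f = e then (1:ℝ) else 0) + (if f = g then ε else 0) with hθ
      have hθc : IsCirculation t h θ := circ_pair hne ε hx
      have hθe : θ e = 1 := by simp [hθ, hne]
      have hθg : θ g = ε := by simp [hθ, hge]
      set μ : E → ℝ := fun f => ψ f - (ψ g / ε) * θ f with hμ
      have hμc : IsCirculation t h μ := circ_combo _ hcirc hθc
      have hμg : μ g = 0 := by
        rw [hμ]; simp only [hθg]; field_simp; ring
      have hμ0 : μ = 0 := by
        by_contra hne0
        refine hmin μ hμc hne0 ?_ g hgC hμg
        intro f hf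
        by_contra hfC
        have h1 : ψ f = 0 := by
          by_contra hh; exact hfC (hsupp f hh)
        have h2 : θ f = 0 := by
          have hfe : f ≠ e := by intro hh; subst hh; exact hfC heC
          have hfg : f ≠ g := by intro hh; subst hh; exact hfC hgC
          simp [hθ, hfe, hfg]
        rw [hμ] at hf
        simp [h1, h2] at hf
      have hev := congrFun hμ0 e
      rw [hμ] at hev
      simp only [hθe, mul_one, Pi.zero_apply, sub_eq_zero] at hev
      have hg1 := hpm g hgC hge
      rcases hg1 with hg1 | hg1 <;> rcases hε with hε1 | hε1 <;>
        rw [hev, hg1, hε1] <;> norm_num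
    by_cases hpar : ∃ g ∈ C, g ≠ e ∧ cmap t h g (t e) = cmap t h g (h e)
    · obtain ⟨g, hgC, hge, hcm⟩ := hpar
      rcases loop_in_contract he hcm with ⟨h1, h2⟩ | ⟨h1, h2⟩
      · refine exch g hgC hge (-1) (Or.inr rfl) ?_
        have hxx : xvec t h e = xvec t h g := by funext v; simp [xvec, h1, h2]
        rw [hxx, neg_one_smul]
        exact add_neg_cancel _
      · refine exch g hgC hge 1 (Or.inl rfl) ?_
        have hxx : xvec t h e = -xvec t h g := by funext v; simp [xvec, h1, h2]
        rw [hxx, one_smul]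
        exact neg_add_cancel _
    · -- contraction case
      have hCne : ∃ g ∈ C, g ≠ e := by
        by_contra hno
        push_neg at hno
        have hs : ∀ f, f ≠ e → ψ f = 0 := by
          intro f hf
          by_contra hh
          exact hf (hno f (hsupp f hh))
        have := circ_supported_eq_zero he hcirc hs
        rw [this] at hψe
        exact hψe rfl
      obtain ⟨g, hgC, hge⟩ := hCne
      have hg : t g ≠ h g := hnoloop g hgC
      have hegne : e ≠ g := Ne.symm hge
      push_neg at hpar
      have he' : contractTail t h g ⟨e, hegne⟩ ≠ contractHead t h g ⟨e, hegne⟩ :=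
        fun hcm' => (hpar g hgC hge) hcm'
      have hcard' : (C.subtype (· ≠ g)).card ≤ n := by
        rw [Finset.card_subtype]
        have h1 : C.filter (· ≠ g) = C.erase g := by
          ext x; simp [Finset.mem_erase, and_comm]
        rw [h1, Finset.card_erase_of_mem hgC]
        omega
      have hres := ih (contractTail t h g) (contractHead t h g) (C.subtype (· ≠ g))
        (fun f => ψ f.1) ⟨e, hegne⟩ hcard' (by simp [Finset.mem_subtype, heC]) he'
        (restrict_circ hg hcirc)
        (by
          intro f hf
          simp only [Finset.mem_subtype]
          exact hsupp f.1 hf)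
        (by
          intro φ' hφ'c hφ'ne hφ'supp f hfC'
          set φ : E → ℝ := extendC t h g φ' with hφ
          have hφc : IsCirculation t h φ := extendC_circ hg hφ'c
          have hφne : φ ≠ 0 := by
            intro h0
            apply hφ'ne
            funext f'
            have h1 := congrFun h0 f'.1
            rw [← extendC_apply t h g φ' f']
            exact h1
          have hφsupp : ∀ f', φ f' ≠ 0 → f' ∈ C := by
            intro f' hf'
            by_cases hf'g : f' = g
            · subst hf'g; exact hgC
            · rw [hφ] at hf'
              have : extendC t h g φ' f' = φ' ⟨f', hf'g⟩ := extendC_apply t h g φ' ⟨f', hf'g⟩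
              rw [this] at hf'
              simpa [Finset.mem_subtype] using hφ'supp _ hf'
          have hfull := hmin φ hφc hφne hφsupp f.1 (by simpa [Finset.mem_subtype] using hfC')
          rw [show φ f.1 = φ' f from extendC_apply t h g φ' f] at hfull
          exact hfull)
        (by
          intro f hfC' hfe
          have hf1 : f.1 ∈ C := by simpa [Finset.mem_subtype] using hfC'
          have hf2 : f.1 ≠ e := by
            intro hh
            exact hfe (Subtype.ext hh)
          exact hpm f.1 hf1 hf2)
        hψe
      exact hres


def liftF (e : E) (A : Finset {f : E // f ≠ e}) : Finset E :=
  A.map (Function.Embedding.subtype _)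

lemma mem_liftF {e : E} {A : Finset {f : E // f ≠ e}} {f : E} :
    f ∈ liftF e A ↔ ∃ hf : f ≠ e, ⟨f, hf⟩ ∈ A := by
  simp only [liftF, Finset.mem_map, Function.Embedding.coe_subtype]
  constructor
  · rintro ⟨⟨a, ha⟩, haA, rfl⟩
    exact ⟨ha, haA⟩
  · rintro ⟨hf, hfA⟩
    exact ⟨⟨f, hf⟩, hfA, rfl⟩

lemma e_not_mem_liftF {e : E} {A : Finset {f : E // f ≠ e}} : e ∉ liftF e A := by
  rw [mem_liftF]
  rintro ⟨hf, -⟩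
  exact hf rfl

lemma subtype_liftF {e : E} (A : Finset {f : E // f ≠ e}) :
    (liftF e A).subtype (· ≠ e) = A := by
  ext ⟨f, hf⟩
  simp only [Finset.mem_subtype, mem_liftF]
  exact ⟨fun ⟨_, hh⟩ => hh, fun hh => ⟨hf, hh⟩⟩

lemma subtype_insert_liftF {e : E} (A : Finset {f : E // f ≠ e}) :
    (insert e (liftF e A)).subtype (· ≠ e) = A := by
  ext ⟨f, hf⟩
  simp only [Finset.mem_subtype, Finset.mem_insert, mem_liftF, hf, false_or]
  exact ⟨fun ⟨_, hh⟩ => hh, fun hh => ⟨hf, hh⟩⟩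

lemma liftF_union {e : E} (A B : Finset {f : E // f ≠ e}) :
    liftF e (A ∪ B) = liftF e A ∪ liftF e B := Finset.map_union _ _

lemma rho_ne_zero {t h : E → V} {e : E} (he : t e ≠ h e) {φ : E → ℝ}
    (hφc : IsCirculation t h φ) (hφne : φ ≠ 0) :
    (fun f : {f : E // f ≠ e} => φ f.1) ≠ 0 := by
  intro h0
  apply hφne
  refine circ_supported_eq_zero he hφc ?_
  intro f hf
  exact congrFun h0 ⟨f, hf⟩

lemma sc_swap {t h : E → V} {Cp Cm : Finset E} (hsc : IsSignedCycle t h Cp Cm) :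
    IsSignedCycle t h Cm Cp := by
  obtain ⟨hd, hne, hc, hm⟩ := hsc
  refine ⟨hd.symm, by rwa [Finset.union_comm], ?_, ?_⟩
  · rw [chiVec_swap]
    exact circ_neg hc
  · intro φ hφc hφne hφs f hf
    rw [Finset.union_comm] at hf
    refine hm φ hφc hφne ?_ f hf
    intro f' hf'
    rw [← Finset.union_comm]
    exact hφs f' hf'

lemma lift_unique {t h : E → V} {e : E} (he : t e ≠ h e) {Dp Dm Dp' Dm' : Finset E}
    (h1 : IsSignedCycle t h Dp Dm) (h2 : IsSignedCycle t h Dp' Dm')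
    (hp : Dp.subtype (· ≠ e) = Dp'.subtype (· ≠ e))
    (hm : Dm.subtype (· ≠ e) = Dm'.subtype (· ≠ e)) : Dp = Dp' ∧ Dm = Dm' := by
  have hmemp : ∀ f : E, f ≠ e → (f ∈ Dp ↔ f ∈ Dp') := by
    intro f hf
    have := Finset.ext_iff.mp hp ⟨f, hf⟩
    simpa [Finset.mem_subtype] using this
  have hmemm : ∀ f : E, f ≠ e → (f ∈ Dm ↔ f ∈ Dm') := by
    intro f hf
    have := Finset.ext_iff.mp hm ⟨f, hf⟩
    simpa [Finset.mem_subtype] using this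
  have hsub : chiVec Dp Dm - chiVec Dp' Dm' = 0 := by
    refine circ_supported_eq_zero he (circ_sub h1.2.2.1 h2.2.2.1) ?_
    intro f hf
    simp only [Pi.sub_apply, chiVec, sub_eq_zero]
    rw [if_congr (hmemp f hf) rfl rfl, if_congr (hmemm f hf) rfl rfl]
  have hchieq : chiVec Dp Dm = chiVec Dp' Dm' := by
    rwa [sub_eq_zero] at hsub
  constructor
  · ext f
    rw [mem_iff_chi_one h1.1, mem_iff_chi_one h2.1, hchieq]
  · ext f
    rw [mem_iff_chi_negone h1.1, mem_iff_chi_negone h2.1, hchieq]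

lemma circ_sum {t h : E → V} {ι : Type*} (s : Finset ι) (a : ι → ℝ) (Φ : ι → E → ℝ)
    (hΦ : ∀ i ∈ s, IsCirculation t h (Φ i)) :
    IsCirculation t h (∑ i ∈ s, a i • Φ i) := by
  unfold IsCirculation at *
  calc ∑ f, (∑ i ∈ s, a i • Φ i) f • xvec t h f
      = ∑ f, ∑ i ∈ s, (a i * Φ i f) • xvec t h f := by
        apply Finset.sum_congr rfl
        intro f _
        rw [← Finset.sum_smul]
        congr 1
        simp [Finset.sum_apply]
    _ = ∑ i ∈ s, ∑ f, (a i * Φ i f) • xvec t h f := Finset.sum_comm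
    _ = ∑ i ∈ s, a i • ∑ f, Φ i f • xvec t h f := by
        apply Finset.sum_congr rfl
        intro i _
        rw [Finset.smul_sum]
        apply Finset.sum_congr rfl
        intro f _
        rw [mul_smul]
    _ = 0 := by
        apply Finset.sum_eq_zero
        intro i hi
        rw [hΦ i hi, smul_zero]

lemma lift_cycle {t h : E → V} {e : E} (he : t e ≠ h e) {Cp Cm : Finset {f : E // f ≠ e}}
    (hsc : IsSignedCycle (contractTail t h e) (contractHead t h e) Cp Cm) :
    ∃ Dp Dm : Finset E, IsSignedCycle t h Dp Dm ∧
      Cp = Dp.subtype (· ≠ e) ∧ Cm = Dm.subtype (· ≠ e) := by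
  obtain ⟨hdisj, hnemp, hcircχ, hmin⟩ := hsc
  set χ' : {f : E // f ≠ e} → ℝ := chiVec Cp Cm with hχ'
  set ψ : E → ℝ := extendC t h e χ' with hψ
  have hψcirc : IsCirculation t h ψ := extendC_circ he hcircχ
  have hψres : ∀ f : {f : E // f ≠ e}, ψ f.1 = χ' f := fun f => extendC_apply t h e χ' f
  have hχ'supp : ∀ f : {f : E // f ≠ e}, χ' f ≠ 0 → f ∈ Cp ∪ Cm := by
    intro f hf
    by_contra hmem
    rw [Finset.mem_union] at hmem
    push_neg at hmem
    simp [hχ', chiVec, hmem.1, hmem.2] at hf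
  have hχ'pm : ∀ f ∈ Cp ∪ Cm, χ' f = 1 ∨ χ' f = -1 := by
    intro f hf
    rw [Finset.mem_union] at hf
    rcases hf with hf | hf
    · exact Or.inl ((mem_iff_chi_one hdisj f).mp hf)
    · exact Or.inr ((mem_iff_chi_negone hdisj f).mp hf)
  -- restriction of a D-circulation supported appropriately
  have hrhosupp : ∀ (φ : E → ℝ), (∀ f : E, φ f ≠ 0 → f ∈ liftF e (Cp ∪ Cm) ∪ {e}) →
      ∀ f' : {f : E // f ≠ e}, φ f'.1 ≠ 0 → f' ∈ Cp ∪ Cm := by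
    intro φ hφs f' hf'
    have := hφs f'.1 hf'
    rw [Finset.mem_union, Finset.mem_singleton] at this
    rcases this with hh | hh
    · rw [mem_liftF] at hh
      obtain ⟨hf1, hf2⟩ := hh
      simpa using hf2
    · exact absurd hh f'.2
  by_cases hv : ψ e = 0
  · -- lift without e
    refine ⟨liftF e Cp, liftF e Cm, ⟨?_, ?_, ?_, ?_⟩, (subtype_liftF Cp).symm,
      (subtype_liftF Cm).symm⟩
    · rw [Finset.disjoint_left]
      intro f hf1 hf2
      rw [mem_liftF] at hf1 hf2
      obtain ⟨ha, hb⟩ := hf1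
      obtain ⟨hc, hd⟩ := hf2
      exact (Finset.disjoint_left.mp hdisj) hb hd
    · obtain ⟨x, hx⟩ := hnemp
      exact ⟨x.1, by rw [← liftF_union, mem_liftF]; exact ⟨x.2, hx⟩⟩
    · have hchieq : chiVec (liftF e Cp) (liftF e Cm) = ψ := by
        funext f
        by_cases hf : f = e
        · subst hf
          simp [chiVec, e_not_mem_liftF, hv]
        · rw [show ψ f = χ' ⟨f, hf⟩ from hψres ⟨f, hf⟩]
          simp only [chiVec, hχ', mem_liftF]
          rw [if_congr (show (∃ h' : f ≠ e, (⟨f, h'⟩ : {f : E // f ≠ e}) ∈ Cp) ↔ (⟨f, hf⟩ : {f : E // f ≠ e}) ∈ Cp by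
            exact ⟨fun ⟨_, hh⟩ => hh, fun hh => ⟨hf, hh⟩⟩) rfl rfl,
            if_congr (show (∃ h' : f ≠ e, (⟨f, h'⟩ : {f : E // f ≠ e}) ∈ Cm) ↔ (⟨f, hf⟩ : {f : E // f ≠ e}) ∈ Cm by
            exact ⟨fun ⟨_, hh⟩ => hh, fun hh => ⟨hf, hh⟩⟩) rfl rfl]
      rw [hchieq]
      exact hψcirc
    · intro φ hφc hφne hφs f hf
      rw [← liftF_union] at hf
      rw [mem_liftF] at hf
      obtain ⟨hfe, hfm⟩ := hf
      have hρc := restrict_circ he hφc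
      have hρne := rho_ne_zero he hφc hφne
      have hρs : ∀ f' : {f : E // f ≠ e}, φ f'.1 ≠ 0 → f' ∈ Cp ∪ Cm := by
        refine hrhosupp φ ?_
        intro f0 hf0
        rw [Finset.mem_union]
        left
        rw [liftF_union]
        exact hφs f0 hf0
      exact hmin _ hρc hρne hρs ⟨f, hfe⟩ hfm
  · -- lift with e : apply REG to C := liftF (Cp ∪ Cm) ∪ {e}
    set C : Finset E := liftF e (Cp ∪ Cm) ∪ {e} with hC
    have heC : e ∈ C := by simp [hC]
    have hψsupp : ∀ f, ψ f ≠ 0 → f ∈ C := by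
      intro f hf
      by_cases hfe : f = e
      · subst hfe; exact heC
      · rw [show ψ f = χ' ⟨f, hfe⟩ from hψres ⟨f, hfe⟩] at hf
        rw [hC, Finset.mem_union, mem_liftF]
        exact Or.inl ⟨hfe, hχ'supp _ hf⟩
    have hminC : ∀ φ : E → ℝ, IsCirculation t h φ → φ ≠ 0 →
        (∀ f, φ f ≠ 0 → f ∈ C) → ∀ f ∈ C, φ f ≠ 0 := by
      intro φ hφc hφne hφs
      have hρc := restrict_circ he hφc
      have hρne := rho_ne_zero he hφc hφne
      have hρs := hrhosupp φ hφs
      have hfull := hmin _ hρc hρne hρs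
      have hφe : φ e ≠ 0 := by
        intro hφe0
        obtain ⟨s₀, hs₀⟩ := hnemp
        have hφs₀ : φ s₀.1 ≠ 0 := hfull s₀ hs₀
        set μ : E → ℝ := fun f => ψ f - (ψ s₀.1 / φ s₀.1) * φ f with hμ
        have hμc : IsCirculation t h μ := circ_combo _ hψcirc hφc
        have hμe : μ e ≠ 0 := by
          rw [hμ]
          simp only [hφe0, mul_zero, sub_zero]
          exact hv
        have hρμs : ∀ f' : {f : E // f ≠ e}, μ f'.1 ≠ 0 → f' ∈ Cp ∪ Cm := by
          intro f' hf'
          have hf'' : ψ f'.1 - ψ s₀.1 / φ s₀.1 * φ f'.1 ≠ 0 := hf'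
          clear hf'
          rename' hf'' => hf'
          by_cases hψ0 : ψ f'.1 = 0
          · rw [hψ0, zero_sub, neg_ne_zero, mul_ne_zero_iff] at hf'
            exact hρs f' hf'.2
          · rw [hψres f'] at hψ0
            exact hχ'supp f' hψ0
        have hρμ0 : (fun f' : {f : E // f ≠ e} => μ f'.1) = 0 := by
          by_contra hρμne
          have := hmin _ (restrict_circ he hμc) hρμne hρμs s₀ hs₀
          apply this
          show ψ s₀.1 - ψ s₀.1 / φ s₀.1 * φ s₀.1 = 0
          rw [div_mul_cancel₀ _ hφs₀, sub_self]
        have hμ0 : μ = 0 := by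
          refine circ_supported_eq_zero he hμc ?_
          intro f hf
          exact congrFun hρμ0 ⟨f, hf⟩
        rw [hμ0] at hμe
        exact hμe rfl
      intro f hf
      rw [hC, Finset.mem_union, Finset.mem_singleton] at hf
      rcases hf with hf | hf
      · rw [mem_liftF] at hf
        obtain ⟨hf1, hf2⟩ := hf
        exact hfull ⟨f, hf1⟩ hf2
      · subst hf; exact hφe
    have hψpm : ∀ f ∈ C, f ≠ e → ψ f = 1 ∨ ψ f = -1 := by
      intro f hf hfe
      rw [hC, Finset.mem_union, Finset.mem_singleton] at hf
      rcases hf with hf | hf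
      · rw [mem_liftF] at hf
        obtain ⟨hf1, hf2⟩ := hf
        rw [show ψ f = χ' ⟨f, hf1⟩ from hψres ⟨f, hf1⟩]
        exact hχ'pm _ hf2
      · exact absurd hf hfe
    have hv1 : ψ e = 1 ∨ ψ e = -1 :=
      REG C.card t h C ψ e le_rfl heC he hψcirc hψsupp hminC hψpm hv
    -- common facts
    have hmemiff : ∀ (f : E) (hfe : f ≠ e) (A : Finset {f : E // f ≠ e}),
        f ∈ liftF e A ↔ (⟨f, hfe⟩ : {f : E // f ≠ e}) ∈ A := by
      intro f hfe A
      rw [mem_liftF]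
      exact ⟨fun ⟨_, hh⟩ => hh, fun hh => ⟨hfe, hh⟩⟩
    rcases hv1 with hv1 | hv1
    · -- e goes to the positive side
      refine ⟨insert e (liftF e Cp), liftF e Cm, ⟨?_, ?_, ?_, ?_⟩,
        (subtype_insert_liftF Cp).symm, (subtype_liftF Cm).symm⟩
      · rw [Finset.disjoint_left]
        intro f hf1 hf2
        rw [Finset.mem_insert] at hf1
        rcases hf1 with hf1 | hf1
        · subst hf1; exact e_not_mem_liftF hf2
        · rw [mem_liftF] at hf1 hf2
          obtain ⟨ha, hb⟩ := hf1
          obtain ⟨hc, hd⟩ := hf2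
          exact (Finset.disjoint_left.mp hdisj) hb hd
      · exact ⟨e, Finset.mem_union_left _ (Finset.mem_insert_self e _)⟩
      · have hchieq : chiVec (insert e (liftF e Cp)) (liftF e Cm) = ψ := by
          funext f
          by_cases hf : f = e
          · subst hf
            simp [chiVec, e_not_mem_liftF, hv1]
          · rw [show ψ f = χ' ⟨f, hf⟩ from hψres ⟨f, hf⟩]
            simp only [chiVec, hχ', Finset.mem_insert, hf, false_or]
            rw [if_congr (hmemiff f hf Cp) rfl rfl, if_congr (hmemiff f hf Cm) rfl rfl]
        rw [hchieq]
        exact hψcirc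
      · have hset : insert e (liftF e Cp) ∪ liftF e Cm = C := by
          rw [hC]
          ext f
          by_cases hf : f = e
          · subst hf
            simp
          · simp only [Finset.mem_union, Finset.mem_insert, Finset.mem_singleton, hf,
              false_or, or_false, mem_liftF]
            constructor
            · rintro (⟨hf', hm⟩ | ⟨hf', hm⟩)
              · exact ⟨hf', Or.inl hm⟩
              · exact ⟨hf', Or.inr hm⟩
            · rintro ⟨hf', hm | hm⟩
              · exact Or.inl ⟨hf', hm⟩
              · exact Or.inr ⟨hf', hm⟩
        rw [hset]
        exact hminC
    · -- e goes to the negative side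
      refine ⟨liftF e Cp, insert e (liftF e Cm), ⟨?_, ?_, ?_, ?_⟩,
        (subtype_liftF Cp).symm, (subtype_insert_liftF Cm).symm⟩
      · rw [Finset.disjoint_left]
        intro f hf1 hf2
        rw [Finset.mem_insert] at hf2
        rcases hf2 with hf2 | hf2
        · subst hf2; exact e_not_mem_liftF hf1
        · rw [mem_liftF] at hf1 hf2
          obtain ⟨ha, hb⟩ := hf1
          obtain ⟨hc, hd⟩ := hf2
          exact (Finset.disjoint_left.mp hdisj) hb hd
      · exact ⟨e, Finset.mem_union_right _ (Finset.mem_insert_self e _)⟩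
      · have hchieq : chiVec (liftF e Cp) (insert e (liftF e Cm)) = ψ := by
          funext f
          by_cases hf : f = e
          · subst hf
            simp [chiVec, e_not_mem_liftF, hv1]
          · rw [show ψ f = χ' ⟨f, hf⟩ from hψres ⟨f, hf⟩]
            simp only [chiVec, hχ', Finset.mem_insert, hf, false_or]
            rw [if_congr (hmemiff f hf Cp) rfl rfl, if_congr (hmemiff f hf Cm) rfl rfl]
        rw [hchieq]
        exact hψcirc
      · have hset : liftF e Cp ∪ insert e (liftF e Cm) = C := by
          rw [hC]
          ext f
          by_cases hf : f = e
          · subst hf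
            simp
          · simp only [Finset.mem_union, Finset.mem_insert, Finset.mem_singleton, hf,
              false_or, or_false, mem_liftF]
            constructor
            · rintro (⟨hf', hm⟩ | ⟨hf', hm⟩)
              · exact ⟨hf', Or.inl hm⟩
              · exact ⟨hf', Or.inr hm⟩
            · rintro ⟨hf', hm | hm⟩
              · exact Or.inl ⟨hf', hm⟩
              · exact Or.inr ⟨hf', hm⟩
        rw [hset]
        exact hminC


/-- if `σ` is an acyclic circuit signature of `D` and `e` is a non-loop
edge, then `σ/e` is an acyclic circuit signature of `D/e`. -/
theorem stmt6 (t h : E → V) (σ : Set (Finset E × Finset E))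
    (hσ : IsCircuitSignature t h σ) (hac : IsAcyclicSig σ)
    (e : E) (he : t e ≠ h e) :
    IsCircuitSignature (contractTail t h e) (contractHead t h e) (contractSig t h σ e) ∧
    IsAcyclicSig (contractSig t h σ e) := by
  obtain ⟨hσ1, hσ2⟩ := hσ
  constructor
  · constructor
    · intro q hq
      exact hq.1
    · intro Cp Cm hsc
      obtain ⟨Dp, Dm, hDsc, hp, hm⟩ := lift_cycle he hsc
      have hswD := sc_swap hDsc
      have mem1 : ((Cp, Cm) ∈ contractSig t h σ e) ↔ (Dp, Dm) ∈ σ := by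
        constructor
        · rintro ⟨-, c, hcσ, h1, h2⟩
          have hcsc := hσ1 c hcσ
          obtain ⟨e1, e2⟩ := lift_unique he hcsc hDsc
            (by rw [← h1]; exact hp) (by rw [← h2]; exact hm)
          have hcD : c = (Dp, Dm) := Prod.ext e1 e2
          rwa [hcD] at hcσ
        · intro hD
          exact ⟨hsc, (Dp, Dm), hD, hp, hm⟩
      have mem2 : ((Cm, Cp) ∈ contractSig t h σ e) ↔ (Dm, Dp) ∈ σ := by
        constructor
        · rintro ⟨-, c, hcσ, h1, h2⟩
          have hcsc := hσ1 c hcσ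
          obtain ⟨e1, e2⟩ := lift_unique he hcsc hswD
            (by rw [← h1]; exact hm) (by rw [← h2]; exact hp)
          have hcD : c = (Dm, Dp) := Prod.ext e1 e2
          rwa [hcD] at hcσ
        · intro hD
          exact ⟨sc_swap hsc, (Dm, Dp), hD, hm, hp⟩
      rw [mem1, mem2]
      exact hσ2 Dp Dm hDsc
  · intro s a hs ha hex hsum0
    obtain ⟨q₀, hq₀s, hq₀a⟩ := hex
    have hw : ∀ q : Finset {f : E // f ≠ e} × Finset {f : E // f ≠ e}, q ∈ s →
        ∃ c : Finset E × Finset E, c ∈ σ ∧ q.1 = c.1.subtype (· ≠ e) ∧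
          q.2 = c.2.subtype (· ≠ e) := by
      intro q hq
      obtain ⟨-, c, hc1, hc2, hc3⟩ := hs hq
      exact ⟨c, hc1, hc2, hc3⟩
    choose! ℓ hℓσ hℓ1 hℓ2 using hw
    set Ψ : E → ℝ := ∑ q ∈ s, a q • chiVec (ℓ q).1 (ℓ q).2 with hΨ
    have hΨcirc : IsCirculation t h Ψ :=
      circ_sum s a _ (fun q hq => (hσ1 _ (hℓσ q hq)).2.2.1)
    have hΨr : ∀ f : E, f ≠ e → Ψ f = 0 := by
      intro f hf
      have h0 := congrFun hsum0 ⟨f, hf⟩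
      rw [Finset.sum_apply, Pi.zero_apply] at h0
      rw [hΨ, Finset.sum_apply]
      rw [← h0]
      apply Finset.sum_congr rfl
      intro q hq
      simp only [Pi.smul_apply, smul_eq_mul]
      congr 1
      have hmem1 : f ∈ (ℓ q).1 ↔ (⟨f, hf⟩ : {f : E // f ≠ e}) ∈ q.1 := by
        rw [hℓ1 q hq, Finset.mem_subtype]
      have hmem2 : f ∈ (ℓ q).2 ↔ (⟨f, hf⟩ : {f : E // f ≠ e}) ∈ q.2 := by
        rw [hℓ2 q hq, Finset.mem_subtype]
      unfold chiVec
      rw [if_congr hmem1 rfl rfl, if_congr hmem2 rfl rfl]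
    have hΨ0 : Ψ = 0 := circ_supported_eq_zero he hΨcirc hΨr
    have hha := hac (s.image ℓ) (fun c => ∑ q ∈ s.filter (fun q => ℓ q = c), a q)
      (by
        intro c hc
        rw [Finset.coe_image] at hc
        obtain ⟨q, hq, rfl⟩ := hc
        exact hℓσ q hq)
      (by
        intro c
        exact Finset.sum_nonneg fun q _ => ha q)
      (by
        refine ⟨ℓ q₀, Finset.mem_image_of_mem ℓ hq₀s, ?_⟩
        intro h0
        have hz := (Finset.sum_eq_zero_iff_of_nonneg (fun q _ => ha q)).mp h0 q₀
          (Finset.mem_filter.mpr ⟨hq₀s, rfl⟩)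
        exact hq₀a hz)
    apply hha
    calc ∑ c ∈ s.image ℓ, (∑ q ∈ s.filter (fun q => ℓ q = c), a q) • chiVec c.1 c.2
        = ∑ c ∈ s.image ℓ, ∑ q ∈ s.filter (fun q => ℓ q = c),
            a q • chiVec (ℓ q).1 (ℓ q).2 := by
          apply Finset.sum_congr rfl
          intro c _
          rw [Finset.sum_smul]
          apply Finset.sum_congr rfl
          intro q hq
          rw [(Finset.mem_filter.mp hq).2]
      _ = ∑ q ∈ s, a q • chiVec (ℓ q).1 (ℓ q).2 :=
          Finset.sum_fiberwise_of_maps_to (fun q hq => Finset.mem_image_of_mem ℓ hq) _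
      _ = 0 := by rw [← hΨ]; exact hΨ0

end Contraction
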